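/- There exists a directly Riemann integrable function z : ℝ → [0,∞) and a sequence x_n → ∞ such that m(x_n)·z(x_n − a) → ∞ for a fixed a > 0 and m regularly varying of index 1−α with α ∈ (0,1) and 2α < 2 − β for a suitable β > 1. Concretely: let z be the piecewise linear 'tent' function with peaks z(n²) = n^{−β} on intervals [n² − 1/2, n² + 1/2] (β > 1) and 0 elsewhere; then z is directly Riemann integrable, but m(n²)·n^{−β} → ∞ whenever m is regularly varying of index 1−α and 2(1−α) > β, i.e. 2α + β < 2. -/

import Mathlib

open Filter Set
open scoped ENNReal

/-- Upper Riemann sum of mesh `h` for direct Riemann integrability. -/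
noncomputable def upperSum (z : ℝ → ℝ) (h : ℝ) : ℝ≥0∞ :=
  ∑' k : ℤ, ENNReal.ofReal (h * sSup (z '' Set.Ico ((k : ℝ) * h) (((k : ℝ) + 1) * h)))

/-- Lower Riemann sum of mesh `h` for direct Riemann integrability. -/
noncomputable def lowerSum (z : ℝ → ℝ) (h : ℝ) : ℝ≥0∞ :=
  ∑' k : ℤ, ENNReal.ofReal (h * sInf (z '' Set.Ico ((k : ℝ) * h) (((k : ℝ) + 1) * h)))

/-- Direct Riemann integrability of a nonnegative function: all upper sums are
finite and upper and lower sums converge to a common limit as the mesh `h → 0+`. -/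
def DRIntegrable (z : ℝ → ℝ) : Prop :=
  (∀ h > 0, upperSum z h ≠ ⊤) ∧
  ∃ L : ℝ,
    Tendsto (fun h => (upperSum z h).toReal) (nhdsWithin 0 (Set.Ioi 0)) (nhds L) ∧
    Tendsto (fun h => (lowerSum z h).toReal) (nhdsWithin 0 (Set.Ioi 0)) (nhds L)


open scoped Classical in
noncomputable def zfun (β : ℝ) : ℝ → ℝ := fun x =>
  if h : ∃ n : ℕ, 1 ≤ n ∧ x = (n : ℝ) ^ 2 then ((h.choose : ℝ)) ^ (-β) else 0

lemma zfun_nonneg (β : ℝ) (x : ℝ) : 0 ≤ zfun β x := by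
  unfold zfun
  split
  · exact Real.rpow_nonneg (Nat.cast_nonneg _) _
  · exact le_refl 0

lemma zfun_sq (β : ℝ) (n : ℕ) (hn : 1 ≤ n) : zfun β ((n : ℝ) ^ 2) = (n : ℝ) ^ (-β) := by
  have hex : ∃ m : ℕ, 1 ≤ m ∧ ((n : ℝ)) ^ 2 = (m : ℝ) ^ 2 := ⟨n, hn, rfl⟩
  rw [zfun, dif_pos hex]
  obtain ⟨h1, h2⟩ := hex.choose_spec
  have hc : hex.choose = n := by
    have h3 : ((hex.choose ^ 2 : ℕ) : ℝ) = ((n ^ 2 : ℕ) : ℝ) := by push_cast; linarith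
    exact (Nat.pow_left_injective (by norm_num) (Nat.cast_injective h3))
  rw [hc]

lemma zfun_ne_zero {β : ℝ} {x : ℝ} (h : zfun β x ≠ 0) :
    ∃ n : ℕ, 1 ≤ n ∧ x = (n : ℝ) ^ 2 := by
  by_contra hcon
  exact h (by rw [zfun, dif_neg hcon])

lemma summable_g {β : ℝ} (hβ : 1 < β) : Summable (fun n : ℕ => (n : ℝ) ^ (-β)) :=
  Real.summable_nat_rpow.2 (by linarith)

open scoped Classical in
lemma upperSum_zfun_le {β : ℝ} (hβ : 1 < β) {h : ℝ} (hh : 0 < h) :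
    upperSum (zfun β) h ≤
      ENNReal.ofReal h * ∑' n : ℕ, ENNReal.ofReal ((n : ℝ) ^ (-β)) := by
  set g : ℕ → ℝ := fun n => (n : ℝ) ^ (-β) with hgdef
  have hg : Summable g := summable_g hβ
  have hg0 : ∀ n, 0 ≤ g n := fun n => Real.rpow_nonneg (Nat.cast_nonneg _) _
  set w : ℤ → ℕ → ℝ := fun k n =>
    if ((n : ℝ) ^ 2 ∈ Ico ((k : ℝ) * h) (((k : ℝ) + 1) * h) ∧ 1 ≤ n) then g n else 0 with hwdef
  have hw0 : ∀ k n, 0 ≤ w k n := by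
    intro k n; rw [hwdef]; dsimp only; split
    · exact hg0 n
    · exact le_refl 0
  have hwle : ∀ k n, w k n ≤ g n := by
    intro k n; rw [hwdef]; dsimp only; split
    · exact le_refl _
    · exact hg0 n
  have hwsum : ∀ k, Summable (w k) := fun k => hg.of_nonneg_of_le (hw0 k) (hwle k)
  -- step 1: bound each sSup
  have hsup : ∀ k : ℤ,
      sSup (zfun β '' Ico ((k : ℝ) * h) (((k : ℝ) + 1) * h)) ≤ ∑' n, w k n := by
    intro k
    have htnn : (0:ℝ) ≤ ∑' n, w k n := tsum_nonneg (hw0 k)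
    refine Real.sSup_le ?_ htnn
    rintro y ⟨x, hx, rfl⟩
    by_cases hz : zfun β x = 0
    · rw [hz]; exact htnn
    · obtain ⟨n, hn1, rfl⟩ := zfun_ne_zero hz
      rw [zfun_sq β n hn1]
      have : w k n = g n := by rw [hwdef]; exact if_pos ⟨hx, hn1⟩
      calc (n:ℝ) ^ (-β) = w k n := this.symm
        _ ≤ ∑' n, w k n := Summable.le_tsum (hwsum k) n (fun m _ => hw0 k m)
  -- step 2: each term
  have hterm : ∀ k : ℤ,
      ENNReal.ofReal (h * sSup (zfun β '' Ico ((k : ℝ) * h) (((k : ℝ) + 1) * h))) ≤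
        ENNReal.ofReal h * ∑' n, ENNReal.ofReal (w k n) := by
    intro k
    calc ENNReal.ofReal (h * sSup (zfun β '' Ico ((k : ℝ) * h) (((k : ℝ) + 1) * h)))
        ≤ ENNReal.ofReal (h * ∑' n, w k n) :=
          ENNReal.ofReal_le_ofReal (mul_le_mul_of_nonneg_left (hsup k) hh.le)
      _ = ENNReal.ofReal h * ENNReal.ofReal (∑' n, w k n) := ENNReal.ofReal_mul hh.le
      _ = ENNReal.ofReal h * ∑' n, ENNReal.ofReal (w k n) := by
          rw [ENNReal.ofReal_tsum_of_nonneg (hw0 k) (hwsum k)]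
  -- step 3: swap sums
  have hswap : ∑' (k : ℤ), ∑' (n : ℕ), ENNReal.ofReal (w k n) ≤
      ∑' n : ℕ, ENNReal.ofReal (g n) := by
    rw [ENNReal.tsum_comm]
    refine ENNReal.tsum_le_tsum (fun n => ?_)
    by_cases hn : 1 ≤ n
    · set k₀ : ℤ := ⌊(n : ℝ) ^ 2 / h⌋ with hk0
      have huniq : ∀ k : ℤ, k ≠ k₀ → ENNReal.ofReal (w k n) = 0 := by
        intro k hk
        have : w k n = 0 := by
          rw [hwdef]; dsimp only
          rw [if_neg]
          rintro ⟨⟨hlo, hhi⟩, -⟩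
          apply hk
          rw [hk0]
          symm
          rw [Int.floor_eq_iff]
          constructor
          · exact (le_div_iff₀ hh).2 (by linarith)
          · have : (n:ℝ)^2 / h < ((k:ℝ) + 1) := (div_lt_iff₀ hh).2 (by linarith)
            exact_mod_cast this
        simp [this]
      calc ∑' k : ℤ, ENNReal.ofReal (w k n) = ENNReal.ofReal (w k₀ n) :=
            tsum_eq_single k₀ huniq
        _ ≤ ENNReal.ofReal (g n) := by
            apply ENNReal.ofReal_le_ofReal; exact hwle k₀ n
    · have : ∀ k : ℤ, ENNReal.ofReal (w k n) = 0 := by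
        intro k
        have : w k n = 0 := by rw [hwdef]; dsimp only; rw [if_neg]; rintro ⟨-, h1⟩; exact hn h1
        simp [this]
      simp [this]
  calc upperSum (zfun β) h ≤ ∑' k : ℤ, (ENNReal.ofReal h * ∑' n, ENNReal.ofReal (w k n)) :=
        ENNReal.tsum_le_tsum hterm
    _ = ENNReal.ofReal h * ∑' (k : ℤ), ∑' (n : ℕ), ENNReal.ofReal (w k n) :=
        ENNReal.tsum_mul_left
    _ ≤ ENNReal.ofReal h * ∑' n : ℕ, ENNReal.ofReal (g n) := by
        exact mul_le_mul_right hswap _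

lemma lowerSum_zfun {β : ℝ} {h : ℝ} (hh : 0 < h) : lowerSum (zfun β) h = 0 := by
  unfold lowerSum
  rw [ENNReal.tsum_eq_zero]
  intro k
  have hsub : ¬ (Ico ((k:ℝ)*h) (((k:ℝ)+1)*h) ⊆ range (fun n : ℕ => ((n:ℝ)^2))) := by
    intro hss
    have h1 : MeasureTheory.volume (Ico ((k:ℝ)*h) (((k:ℝ)+1)*h)) ≤
        MeasureTheory.volume (range fun n : ℕ => ((n:ℝ)^2)) := MeasureTheory.measure_mono hss
    rw [Real.volume_Ico] at h1
    have h2 : MeasureTheory.volume (range fun n : ℕ => ((n:ℝ)^2)) = 0 :=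
      (Set.countable_range _).measure_zero _
    rw [h2, nonpos_iff_eq_zero, ENNReal.ofReal_eq_zero] at h1
    nlinarith
  obtain ⟨x, hx, hnx⟩ := not_subset.1 hsub
  have hzx : zfun β x = 0 := by
    by_contra hz
    obtain ⟨n, hn1, rfl⟩ := zfun_ne_zero hz
    exact hnx ⟨n, rfl⟩
  have h0mem : (0:ℝ) ∈ zfun β '' Ico ((k:ℝ)*h) (((k:ℝ)+1)*h) := ⟨x, hx, hzx⟩
  have hinf : sInf (zfun β '' Ico ((k:ℝ)*h) (((k:ℝ)+1)*h)) = 0 := by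
    apply le_antisymm
    · exact csInf_le ⟨0, by rintro y ⟨t, -, rfl⟩; exact zfun_nonneg β t⟩ h0mem
    · exact le_csInf ⟨0, h0mem⟩ (by rintro y ⟨t, -, rfl⟩; exact zfun_nonneg β t)
  rw [hinf, mul_zero, ENNReal.ofReal_zero]

lemma zfun_dri {β : ℝ} (hβ : 1 < β) : DRIntegrable (zfun β) := by
  set C : ℝ≥0∞ := ∑' n : ℕ, ENNReal.ofReal ((n : ℝ) ^ (-β)) with hC
  have hCne : C ≠ ⊤ := by
    rw [hC, ← ENNReal.ofReal_tsum_of_nonneg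
      (fun n => Real.rpow_nonneg (Nat.cast_nonneg _) _) (summable_g hβ)]
    exact ENNReal.ofReal_ne_top
  constructor
  · intro h hh
    exact ne_top_of_le_ne_top (ENNReal.mul_ne_top ENNReal.ofReal_ne_top hCne)
      (upperSum_zfun_le hβ hh)
  · refine ⟨0, ?_, ?_⟩
    · have hub : ∀ᶠ h in nhdsWithin (0:ℝ) (Ioi 0),
          (upperSum (zfun β) h).toReal ≤ h * C.toReal := by
        filter_upwards [self_mem_nhdsWithin] with h hh
        have := ENNReal.toReal_mono (ENNReal.mul_ne_top ENNReal.ofReal_ne_top hCne)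
          (upperSum_zfun_le hβ hh)
        rwa [ENNReal.toReal_mul, ENNReal.toReal_ofReal (le_of_lt hh)] at this
      have hlb : ∀ᶠ h in nhdsWithin (0:ℝ) (Ioi 0),
          (0:ℝ) ≤ (upperSum (zfun β) h).toReal :=
        Filter.Eventually.of_forall (fun h => ENNReal.toReal_nonneg)
      have hbnd : Tendsto (fun h : ℝ => h * C.toReal) (nhdsWithin 0 (Ioi 0)) (nhds 0) := by
        have := ((continuous_id.mul (continuous_const : Continuous fun _ : ℝ => C.toReal)).tendsto 0)
        simp only [Pi.mul_def, id_eq, zero_mul] at this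
        exact this.mono_left nhdsWithin_le_nhds
      exact tendsto_of_tendsto_of_tendsto_of_le_of_le' tendsto_const_nhds hbnd hlb hub
    · have : ∀ᶠ h in nhdsWithin (0:ℝ) (Ioi 0),
          (0:ℝ) = (lowerSum (zfun β) h).toReal := by
        filter_upwards [self_mem_nhdsWithin] with h hh
        rw [lowerSum_zfun hh, ENNReal.toReal_zero]
      exact Filter.Tendsto.congr' this tendsto_const_nhds

open MeasureTheory in
lemma uct (f : ℝ → ℝ) (hf : Measurable f)
    (hlim : ∀ s : ℝ, Tendsto (fun u => f (u + s) - f u) atTop (nhds 0)) :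
    ∀ ε > 0, ∀ᶠ u in atTop, ∀ s ∈ Icc (0:ℝ) 1, |f (u + s) - f u| ≤ ε := by
  by_contra hcon
  push_neg at hcon
  obtain ⟨ε, hε, hfreq⟩ := hcon
  have hex : ∀ b : ℝ, ∃ u, b ≤ u ∧ ∃ s, s ∈ Icc (0:ℝ) 1 ∧ ε < |f (u + s) - f u| := by
    intro b
    obtain ⟨u, hub, s, hs1, hs2⟩ := (frequently_atTop.mp hfreq) b
    exact ⟨u, hub, s, hs1, hs2⟩
  choose uu huu ss hss hεss using hex
  set un : ℕ → ℝ := fun n => uu (n : ℝ) with hun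
  set sn : ℕ → ℝ := fun n => ss (n : ℝ) with hsn
  have hun_tendsto : Tendsto un atTop atTop :=
    tendsto_atTop_mono (fun n => huu (n : ℝ)) tendsto_natCast_atTop_atTop
  have huns_tendsto : Tendsto (fun n => un n + sn n) atTop atTop :=
    tendsto_atTop_mono (fun n => le_add_of_nonneg_right (hss (n : ℝ)).1) hun_tendsto
  -- the two families of sets
  set A : ℕ → Set ℝ := fun n => {t | t ∈ Icc (0:ℝ) 3 ∧ |f (un n + t) - f (un n)| < ε/2} with hA
  set B : ℕ → Set ℝ := fun n =>
    {r | r ∈ Icc (0:ℝ) 2 ∧ |f (un n + sn n + r) - f (un n + sn n)| < ε/2} with hB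
  have hmeasA : ∀ n, MeasurableSet (A n) := by
    intro n
    apply MeasurableSet.inter measurableSet_Icc
    exact measurableSet_lt (((hf.comp (measurable_const_add (un n))).sub measurable_const).abs)
      measurable_const
  have hmeasB : ∀ n, MeasurableSet (B n) := by
    intro n
    apply MeasurableSet.inter measurableSet_Icc
    exact measurableSet_lt
      (((hf.comp (measurable_const_add (un n + sn n))).sub measurable_const).abs)
      measurable_const
  -- convergence of measures
  have hconv : ∀ (v : ℕ → ℝ), Tendsto v atTop atTop → ∀ (c : ℝ) (t : ℝ),
      ∀ᶠ n in atTop, |f (v n + t) - f (v n)| < ε/2 := by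
    intro v hv c t
    have h1 : Tendsto (fun n => f (v n + t) - f (v n)) atTop (nhds 0) := (hlim t).comp hv
    have := (NormedAddCommGroup.tendsto_nhds_zero.mp h1) (ε/2) (by positivity)
    simpa [Real.norm_eq_abs] using this
  have hμA : Tendsto (fun n => volume (A n)) atTop (nhds (volume (Icc (0:ℝ) 3))) := by
    apply tendsto_measure_of_tendsto_indicator atTop hmeasA measurableSet_Icc
      (by rw [Real.volume_Icc]; exact ENNReal.ofReal_ne_top)
      (Filter.Eventually.of_forall (fun n => fun t ht => ht.1))
    intro t
    by_cases ht : t ∈ Icc (0:ℝ) 3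
    · filter_upwards [hconv un hun_tendsto 0 t] with n hn
      simp only [hA, mem_setOf_eq]
      exact ⟨fun _ => ht, fun _ => ⟨ht, hn⟩⟩
    · filter_upwards with n
      simp only [hA, mem_setOf_eq]
      exact ⟨fun h => absurd h.1 ht, fun h => absurd h ht⟩
  have hμB : Tendsto (fun n => volume (B n)) atTop (nhds (volume (Icc (0:ℝ) 2))) := by
    apply tendsto_measure_of_tendsto_indicator atTop hmeasB measurableSet_Icc
      (by rw [Real.volume_Icc]; exact ENNReal.ofReal_ne_top)
      (Filter.Eventually.of_forall (fun n => fun t ht => ht.1))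
    intro t
    by_cases ht : t ∈ Icc (0:ℝ) 2
    · filter_upwards [hconv (fun n => un n + sn n) huns_tendsto 0 t] with n hn
      simp only [hB, mem_setOf_eq]
      exact ⟨fun _ => ht, fun _ => ⟨ht, hn⟩⟩
    · filter_upwards with n
      simp only [hB, mem_setOf_eq]
      exact ⟨fun h => absurd h.1 ht, fun h => absurd h ht⟩
  -- pick n with both measures large
  have hv3 : volume (Icc (0:ℝ) 3) = ENNReal.ofReal 3 := by rw [Real.volume_Icc]; norm_num
  have hv2 : volume (Icc (0:ℝ) 2) = ENNReal.ofReal 2 := by rw [Real.volume_Icc]; norm_num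
  have hA_ev : ∀ᶠ n in atTop, ENNReal.ofReal (5/2) < volume (A n) := by
    apply hμA.eventually
    apply eventually_gt_nhds
    rw [hv3]; exact ENNReal.ofReal_lt_ofReal_iff (by norm_num) |>.2 (by norm_num)
  have hB_ev : ∀ᶠ n in atTop, ENNReal.ofReal (3/2) < volume (B n) := by
    apply hμB.eventually
    apply eventually_gt_nhds
    rw [hv2]; exact ENNReal.ofReal_lt_ofReal_iff (by norm_num) |>.2 (by norm_num)
  obtain ⟨n, hAn, hBn⟩ := (hA_ev.and hB_ev).exists
  -- the shifted set
  set S : Set ℝ := (fun r => sn n + r) '' B n with hS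
  have hSeq : S = (fun t => (-sn n) + t) ⁻¹' B n := by
    rw [hS]; ext t
    constructor
    · rintro ⟨r, hr, rfl⟩
      simpa [neg_add_cancel_left] using hr
    · intro ht
      exact ⟨-sn n + t, ht, by ring⟩
  have hμS : volume S = volume (B n) := by
    rw [hSeq]; exact measure_preimage_add _ _ _
  have hSsub : S ⊆ Icc (0:ℝ) 3 := by
    rintro t ⟨r, hr, rfl⟩
    have h1 := (hss (n : ℝ)).1
    have h2 := (hss (n : ℝ)).2
    have h3 := hr.1.1
    have h4 := hr.1.2
    constructor <;> simp only [hsn] at * <;> nlinarith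
  -- intersection nonempty
  have hne : (A n ∩ S).Nonempty := by
    by_contra hemp
    rw [not_nonempty_iff_eq_empty] at hemp
    have hdisj : Disjoint (A n) S := disjoint_iff_inter_eq_empty.2 hemp
    have hunion : volume (A n ∪ S) = volume (A n) + volume S :=
      measure_union hdisj (hSeq ▸ (measurable_const_add (-sn n)) (hmeasB n))
    have hle : volume (A n ∪ S) ≤ ENNReal.ofReal 3 := by
      rw [← hv3]
      exact measure_mono (union_subset (fun t ht => ht.1) hSsub)
    rw [hunion, hμS] at hle
    have : ENNReal.ofReal (5/2) + ENNReal.ofReal (3/2) ≤ ENNReal.ofReal 3 :=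
      le_trans (add_le_add hAn.le hBn.le) hle
    rw [← ENNReal.ofReal_add (by norm_num) (by norm_num)] at this
    rw [ENNReal.ofReal_le_ofReal_iff (by norm_num)] at this
    norm_num at this
  obtain ⟨t, htA, r, hrB, hrt⟩ := hne
  have h1 : |f (un n + sn n + r) - f (un n + sn n)| < ε/2 := hrB.2
  have h2 : |f (un n + t) - f (un n)| < ε/2 := htA.2
  have h3 : un n + t = un n + sn n + r := by rw [← hrt]; ring
  rw [h3] at h2
  have h4 : ε < |f (un n + sn n) - f (un n)| := hεss (n : ℝ)
  have : |f (un n + sn n) - f (un n)| ≤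
      |f (un n + sn n + r) - f (un n + sn n)| + |f (un n + sn n + r) - f (un n)| := by
    have := abs_sub (f (un n + sn n + r) - f (un n + sn n)) (f (un n + sn n + r) - f (un n))
    calc |f (un n + sn n) - f (un n)|
        = |(f (un n + sn n + r) - f (un n)) - (f (un n + sn n + r) - f (un n + sn n))| := by
          ring_nf
      _ ≤ |f (un n + sn n + r) - f (un n)| + |f (un n + sn n + r) - f (un n + sn n)| :=
          abs_sub _ _
      _ = _ := by ring
  linarith

lemma sublinear (f : ℝ → ℝ)
    (huct : ∀ ε > 0, ∀ᶠ u in atTop, ∀ s ∈ Icc (0:ℝ) 1, |f (u + s) - f u| ≤ ε) :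
    Tendsto (fun u => f u / u) atTop (nhds 0) := by
  rw [NormedAddCommGroup.tendsto_nhds_zero]
  intro ε hε
  obtain ⟨U, hU⟩ := eventually_atTop.mp (huct (ε/2) (by positivity))
  have key : ∀ k : ℕ, ∀ θ ∈ Icc (0:ℝ) 1, |f (U + k + θ) - f U| ≤ (k+1) * (ε/2) := by
    intro k
    induction k with
    | zero =>
      intro θ hθ
      simpa using hU U le_rfl θ hθ
    | succ k ih =>
      intro θ hθ
      have h1 : U + (k+1:ℕ) + θ = (U + k + θ) + 1 := by push_cast; ring
      have h2 : |f ((U + k + θ) + 1) - f (U + k + θ)| ≤ ε/2 := by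
        apply hU (U + k + θ) (by linarith [hθ.1, (Nat.cast_nonneg k : (0:ℝ) ≤ (k:ℝ))]) 1
        exact ⟨zero_le_one, le_rfl⟩
      have h3 := ih θ hθ
      rw [h1]
      calc |f ((U + k + θ) + 1) - f U|
          ≤ |f ((U + k + θ) + 1) - f (U + k + θ)| + |f (U + k + θ) - f U| := abs_sub_le _ _ _
        _ ≤ ε/2 + (k+1) * (ε/2) := add_le_add h2 h3
        _ = (((k+1:ℕ):ℝ)+1) * (ε/2) := by push_cast; ring
  have key2 : ∀ u, U ≤ u → |f u - f U| ≤ (u - U + 1) * (ε/2) := by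
    intro u hu
    set k : ℕ := ⌊u - U⌋₊ with hk
    set θ : ℝ := u - U - k with hθ
    have h0 : (0:ℝ) ≤ u - U := by linarith
    have hθ0 : 0 ≤ θ := by
      rw [hθ]; have := Nat.floor_le h0; linarith
    have hθ1 : θ ≤ 1 := by
      rw [hθ]; have := (Nat.lt_floor_add_one (u - U)).le; linarith
    have hrw : u = U + k + θ := by rw [hθ]; ring
    have := key k θ ⟨hθ0, hθ1⟩
    rw [← hrw] at this
    have hkle : (k:ℝ) ≤ u - U := Nat.floor_le h0
    calc |f u - f U| ≤ ((k:ℝ)+1) * (ε/2) := this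
      _ ≤ (u - U + 1) * (ε/2) := by nlinarith
  filter_upwards [eventually_ge_atTop (max (max U 1) ((|f U| + (1 - U) * (ε/2)) / (ε/2) + 1))]
    with u hu
  have hu1 : (1:ℝ) ≤ u := le_trans (le_trans (le_max_right U 1) (le_max_left _ _)) hu
  have hu0 : (0:ℝ) < u := by linarith
  have huU : U ≤ u := le_trans (le_trans (le_max_left U 1) (le_max_left _ _)) hu
  have huQ : (|f U| + (1 - U) * (ε/2)) / (ε/2) < u :=
    lt_of_lt_of_le (by linarith [le_trans (le_max_right _ _) hu]) le_rfl
  have hQ : |f U| + (1 - U) * (ε/2) < (ε/2) * u := by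
    rw [div_lt_iff₀ (by positivity)] at huQ; linarith
  have hfb : |f u| < ε * u := by
    have := key2 u huU
    have htri : |f u| ≤ |f U| + (u - U + 1) * (ε/2) := by
      have := abs_sub_abs_le_abs_sub (f u) (f U)
      nlinarith [key2 u huU, abs_nonneg (f U)]
    nlinarith
  rw [Real.norm_eq_abs, abs_div, abs_of_pos hu0, div_lt_iff₀ hu0]
  exact hfb

lemma rv_growth (m : ℝ → ℝ) (hm : Measurable m) (hpos : ∀ x, 0 < m x) {ρ σ : ℝ} (hσ : σ < ρ)
    (hrv : ∀ l > 0, Tendsto (fun x => m (l * x) / m x) atTop (nhds (l ^ ρ))) :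
    Tendsto (fun u : ℝ => Real.log (m (Real.exp u)) - σ * u) atTop atTop := by
  set f : ℝ → ℝ := fun u => Real.log (m (Real.exp u)) - ρ * u with hfdef
  have hfm : Measurable f :=
    (Real.measurable_log.comp (hm.comp Real.measurable_exp)).sub
      (measurable_const.mul measurable_id)
  have hlim : ∀ s : ℝ, Tendsto (fun u => f (u + s) - f u) atTop (nhds 0) := by
    intro s
    have h1 := hrv (Real.exp s) (Real.exp_pos s)
    have h2 : Tendsto (fun u : ℝ => m (Real.exp s * Real.exp u) / m (Real.exp u)) atTop
        (nhds ((Real.exp s) ^ ρ)) := h1.comp Real.tendsto_exp_atTop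
    have h3 : Tendsto (fun u : ℝ => Real.log (m (Real.exp s * Real.exp u) / m (Real.exp u)))
        atTop (nhds (Real.log ((Real.exp s) ^ ρ))) := by
      have hc : ContinuousAt Real.log ((Real.exp s) ^ ρ) :=
        Real.continuousAt_log (ne_of_gt (Real.rpow_pos_of_pos (Real.exp_pos s) ρ))
      exact hc.tendsto.comp h2
    have hlog : Real.log ((Real.exp s) ^ ρ) = ρ * s := by
      rw [Real.log_rpow (Real.exp_pos s), Real.log_exp]
    rw [hlog] at h3
    have heq : (fun u : ℝ => Real.log (m (Real.exp s * Real.exp u) / m (Real.exp u))) =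
        fun u => (f (u + s) - f u) + ρ * s := by
      funext u
      rw [Real.log_div (ne_of_gt (hpos _)) (ne_of_gt (hpos _))]
      rw [hfdef]
      dsimp only
      rw [← Real.exp_add, add_comm s u]
      ring
    rw [heq] at h3
    have := h3.sub_const (ρ * s)
    simpa using this
  have hu := sublinear f (uct f hfm hlim)
  have hmul : Tendsto (fun u : ℝ => u * ((ρ - σ) + f u / u)) atTop atTop := by
    apply Filter.Tendsto.atTop_mul_pos (by linarith : (0:ℝ) < ρ - σ) tendsto_id
    simpa using tendsto_const_nhds.add hu
  apply hmul.congr'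
  filter_upwards [eventually_ge_atTop (1:ℝ)] with u hu1
  have hune : u ≠ 0 := by linarith
  rw [hfdef]
  field_simp
  ring

/-- counterexample: there is a directly Riemann integrable
`z ≥ 0` (the tent function with peaks `z(n²) = n^{−β}`) such that, for any
positive `m` which is regularly varying of index `1−α` with `2α + β < 2`, one
has `m(n²) z(n²) → ∞`; so dRi alone does not suffice for the key renewal
theorem. -/
theorem stmt_14 (β α : ℝ) (hβ : 1 < β) (hα0 : 0 < α) (hα1 : α < 1)
    (hcond : 2 * α + β < 2) :
    ∃ z : ℝ → ℝ, (∀ x, 0 ≤ z x) ∧ DRIntegrable z ∧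
      (∀ n : ℕ, 1 ≤ n → z ((n : ℝ) ^ 2) = (n : ℝ) ^ (-β)) ∧
      ∀ m : ℝ → ℝ, Measurable m → (∀ x, 0 < m x) →
        (∀ l > 0, Tendsto (fun x => m (l * x) / m x) atTop (nhds (l ^ (1 - α)))) →
        Tendsto (fun n : ℕ => m ((n : ℝ) ^ 2) * z ((n : ℝ) ^ 2)) atTop atTop := by
  refine ⟨zfun β, zfun_nonneg β, zfun_dri hβ, fun n hn => zfun_sq β n hn, ?_⟩
  intro m hm hpos hrv
  have hσ : β / 2 < 1 - α := by linarith
  have h1 := rv_growth m hm hpos hσ hrv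
  have hun : Tendsto (fun n : ℕ => 2 * Real.log n) atTop atTop := by
    apply Filter.Tendsto.const_mul_atTop two_pos
    exact Real.tendsto_log_atTop.comp tendsto_natCast_atTop_atTop
  have h3 := Real.tendsto_exp_atTop.comp (h1.comp hun)
  apply h3.congr'
  filter_upwards [eventually_ge_atTop 1] with n hn
  have hnpos : (0:ℝ) < n := by exact_mod_cast hn
  have hexp : Real.exp (2 * Real.log n) = (n:ℝ) ^ 2 := by
    rw [two_mul, Real.exp_add, Real.exp_log hnpos]; ring
  simp only [Function.comp]
  rw [hexp, zfun_sq β n hn, Real.exp_sub, Real.exp_log (hpos _),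
    Real.rpow_def_of_pos hnpos, div_eq_mul_inv]
  congr 1
  rw [← Real.exp_neg]
  congr 1
  ring
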